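/- Let t, W, x ∈ ℂ with t ∉ {1, -1, -1/3, 5/3, 0}, W² = (1+t)(5-3t), and x³ = -1/z where z = (1-t)²(1+t). Set w₁ = 1-t, w₂ = (1+t-W)/2, w₃ = (1+t+W)/2, A = 2t/((1+3t)(1-t)), B = t/((1+3t)(t-1)) + (3t²-3t-2)·W/((t²-1)(3t+1)(3t-5)), C = t/((1+3t)(t-1)) - (3t²-3t-2)·W/((t²-1)(3t+1)(3t-5)). Define s : ℕ → ℂ by s 0 = 0, s 1 = 2, s 2 = 2x, and s n = 2x·s(n-1) + s(n-3) for n ≥ 3. Then for every n ≥ 1, s n = x^{n-1}·(A·w₁ⁿ + B·w₂ⁿ + C·w₃ⁿ). -/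
import Mathlib
set_option maxHeartbeats 1000000


theorem binet_formula_third_order_pell_second_version
    (t W x z w₁ w₂ w₃ A B C : ℂ)
    (ht1 : t ≠ 1) (ht2 : t ≠ -1) (ht3 : t ≠ -1/3) (ht4 : t ≠ 5/3) (ht5 : t ≠ 0)
    (hW : W ^ 2 = (1 + t) * (5 - 3 * t))
    (hz : z = (1 - t) ^ 2 * (1 + t))
    (hx : x ^ 3 = -1 / z)
    (hw1 : w₁ = 1 - t)
    (hw2 : w₂ = (1 + t - W) / 2)
    (hw3 : w₃ = (1 + t + W) / 2)
    (hA : A = 2 * t / ((1 + 3 * t) * (1 - t)))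
    (hB : B = t / ((1 + 3 * t) * (t - 1)) +
      (3 * t ^ 2 - 3 * t - 2) * W / ((t ^ 2 - 1) * (3 * t + 1) * (3 * t - 5)))
    (hC : C = t / ((1 + 3 * t) * (t - 1)) -
      (3 * t ^ 2 - 3 * t - 2) * W / ((t ^ 2 - 1) * (3 * t + 1) * (3 * t - 5)))
    (s : ℕ → ℂ)
    (h0 : s 0 = 0) (h1 : s 1 = 2) (h2 : s 2 = 2 * x)
    (hrec : ∀ n, 3 ≤ n → s n = 2 * x * s (n - 1) + s (n - 3)) :
    ∀ n, 1 ≤ n → s n = x ^ (n - 1) * (A * w₁ ^ n + B * w₂ ^ n + C * w₃ ^ n) := by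
  have h1mt : (1 : ℂ) - t ≠ 0 := fun h => ht1 (by linear_combination -h)
  have h1pt : (1 : ℂ) + t ≠ 0 := fun h => ht2 (by linear_combination h)
  have htm1 : t - 1 ≠ 0 := fun h => ht1 (by linear_combination h)
  have htp1 : t + 1 ≠ 0 := fun h => ht2 (by linear_combination h)
  have h13 : (1 : ℂ) + 3 * t ≠ 0 := fun h => ht3 (by linear_combination h / 3)
  have h31 : 3 * t + 1 ≠ 0 := fun h => ht3 (by linear_combination h / 3)
  have h35 : 3 * t - 5 ≠ 0 := fun h => ht4 (by linear_combination h / 3)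
  have hz0 : z ≠ 0 := by
    rw [hz]
    exact mul_ne_zero (pow_ne_zero 2 h1mt) h1pt
  have hx0 : x ≠ 0 := by
    intro h
    have h3 : x ^ 3 = 0 := by rw [h]; ring
    rw [hx] at h3
    rcases div_eq_zero_iff.mp h3 with h' | h'
    · exact absurd h' (by norm_num)
    · exact hz0 h'
  have hxz : z * x ^ 3 = -1 := by
    rw [hx]
    field_simp
  -- Sums
  have hBC : B + C = 2 * t / ((1 + 3 * t) * (t - 1)) := by
    rw [hB, hC]; ring
  have hS0 : A + B + C = 0 := by
    rw [add_assoc, hBC, hA]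
    rw [div_add_div _ _ (mul_ne_zero h13 h1mt) (mul_ne_zero h13 htm1),
      div_eq_zero_iff]
    left
    ring
  have hS1 : A * w₁ + B * w₂ + C * w₃ = 2 := by
    have step1 : A * w₁ + B * w₂ + C * w₃ =
        A * (1 - t) + (t / ((1 + 3 * t) * (t - 1))) * (1 + t) -
          ((3 * t ^ 2 - 3 * t - 2) / (((t - 1) * (t + 1)) * (3 * t + 1) * (3 * t - 5))) *
            ((1 + t) * (5 - 3 * t)) := by
      rw [hw1, hw2, hw3, hB, hC]
      linear_combination (-((3 * t ^ 2 - 3 * t - 2) /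
        (((t - 1) * (t + 1)) * (3 * t + 1) * (3 * t - 5)))) * hW
    rw [step1, hA]
    rw [div_mul_eq_mul_div, div_mul_eq_mul_div, div_mul_eq_mul_div,
      div_add_div _ _ (mul_ne_zero h13 h1mt) (mul_ne_zero h13 htm1),
      div_sub_div _ _ (mul_ne_zero (mul_ne_zero h13 h1mt) (mul_ne_zero h13 htm1))
        (mul_ne_zero (mul_ne_zero (mul_ne_zero htm1 htp1) h31) h35),
      div_eq_iff (mul_ne_zero (mul_ne_zero (mul_ne_zero h13 h1mt) (mul_ne_zero h13 htm1))
        (mul_ne_zero (mul_ne_zero (mul_ne_zero htm1 htp1) h31) h35))]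
    ring
  have hS2 : A * w₁ ^ 2 + B * w₂ ^ 2 + C * w₃ ^ 2 = 2 := by
    have step1 : A * w₁ ^ 2 + B * w₂ ^ 2 + C * w₃ ^ 2 =
        A * (1 - t) ^ 2 + (t / ((1 + 3 * t) * (t - 1))) *
            ((1 + t) ^ 2 + (1 + t) * (5 - 3 * t)) / 2 -
          ((3 * t ^ 2 - 3 * t - 2) / (((t - 1) * (t + 1)) * (3 * t + 1) * (3 * t - 5))) *
            ((1 + t) * ((1 + t) * (5 - 3 * t))) := by
      rw [hw1, hw2, hw3, hB, hC]
      linear_combination ((t / ((1 + 3 * t) * (t - 1))) / 2 -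
        ((3 * t ^ 2 - 3 * t - 2) / (((t - 1) * (t + 1)) * (3 * t + 1) * (3 * t - 5))) *
          (1 + t)) * hW
    rw [step1, hA]
    rw [div_mul_eq_mul_div, div_mul_eq_mul_div, div_mul_eq_mul_div, div_div,
      div_add_div _ _ (mul_ne_zero h13 h1mt)
        (mul_ne_zero (mul_ne_zero h13 htm1) (two_ne_zero)),
      div_sub_div _ _ (mul_ne_zero (mul_ne_zero h13 h1mt)
          (mul_ne_zero (mul_ne_zero h13 htm1) (two_ne_zero)))
        (mul_ne_zero (mul_ne_zero (mul_ne_zero htm1 htp1) h31) h35),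
      div_eq_iff (mul_ne_zero (mul_ne_zero (mul_ne_zero h13 h1mt)
          (mul_ne_zero (mul_ne_zero h13 htm1) (two_ne_zero)))
        (mul_ne_zero (mul_ne_zero (mul_ne_zero htm1 htp1) h31) h35))]
    ring
  -- Cubic equations
  have hc1 : w₁ ^ 3 = 2 * w₁ ^ 2 - z := by rw [hw1, hz]; ring
  have hc2 : w₂ ^ 3 = 2 * w₂ ^ 2 - z := by
    rw [hw2, hz]
    linear_combination ((3 * t - 1 - W) / 8) * hW
  have hc3 : w₃ ^ 3 = 2 * w₃ ^ 2 - z := by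
    rw [hw3, hz]
    linear_combination ((3 * t - 1 + W) / 8) * hW
  -- Strong induction
  have key : ∀ n, s n = x ^ (n - 1) * (A * w₁ ^ n + B * w₂ ^ n + C * w₃ ^ n) ∧
      s (n + 1) = x ^ n * (A * w₁ ^ (n + 1) + B * w₂ ^ (n + 1) + C * w₃ ^ (n + 1)) ∧
      s (n + 2) = x ^ (n + 1) * (A * w₁ ^ (n + 2) + B * w₂ ^ (n + 2) + C * w₃ ^ (n + 2)) := by
    intro n
    induction n with
    | zero =>
      refine ⟨?_, ?_, ?_⟩
      · simp only [Nat.zero_sub, pow_zero, one_mul, mul_one, h0]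
        linear_combination -hS0
      · simp only [pow_zero, pow_one, one_mul, h1]
        linear_combination -hS1
      · simp only [pow_one, h2]
        linear_combination -x * hS2
    | succ m ih =>
      obtain ⟨ihm, ihm1, ihm2⟩ := ih
      refine ⟨ihm1, ihm2, ?_⟩
      have hr := hrec (m + 3) (by omega)
      have e1 : m + 3 - 1 = m + 2 := rfl
      have e3 : m + 3 - 3 = m := rfl
      rw [e1, e3, ihm2, ihm] at hr
      rw [show m + 1 + 2 = m + 3 from rfl, show m + 1 + 1 = m + 2 from rfl, hr]
      cases m with
      | zero =>
        simp only [Nat.zero_sub, pow_zero, one_mul, mul_one]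
        linear_combination (-(x ^ 2 * A)) * hc1 + (-(x ^ 2 * B)) * hc2 + (-(x ^ 2 * C)) * hc3 +
          (1 + x ^ 2 * z) * hS0
      | succ k =>
        have e4 : k + 1 - 1 = k := rfl
        rw [e4]
        linear_combination (-(x ^ (k + 3) * A * w₁ ^ (k + 1))) * hc1 +
          (-(x ^ (k + 3) * B * w₂ ^ (k + 1))) * hc2 +
          (-(x ^ (k + 3) * C * w₃ ^ (k + 1))) * hc3 +
          (x ^ k * (A * w₁ ^ (k + 1) + B * w₂ ^ (k + 1) + C * w₃ ^ (k + 1))) * hxz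
  intro n _
  exact (key n).1
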